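/- Let F : A → B be a fully faithful functor with adjoints L ⊣ F ⊣ R. Then the two canonical natural transformations R → L, namely φ = (η_R⁻¹ L) ∘ (R η_L) : R → RFL → L and ψ = (L ε_R) ∘ (ε_L⁻¹ R) : R → LFR → L, are equal. -/

import Mathlib

open CategoryTheory

/-- For a fully faithful `F` with adjoints `L ⊣ F ⊣ R`, the two
canonical natural transformations `R ⟶ L`, namely
`φ = (η_R⁻¹ L) ∘ (R η_L)` and `ψ = (L ε_R) ∘ (ε_L⁻¹ R)`, coincide. -/
theorem exceptional_canonical_maps_eq {A B : Type*} [Category A] [Category B]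
    (F : A ⥤ B) (L R : B ⥤ A) (adjL : L ⊣ F) (adjR : F ⊣ R)
    [F.Full] [F.Faithful] :
    Functor.whiskerRight adjL.unit R ≫ inv (Functor.whiskerLeft L adjR.unit)
      = inv (Functor.whiskerLeft R adjL.counit) ≫ Functor.whiskerRight adjR.counit L := by
  ext X
  have heps : F.map (adjL.counit.app (R.obj X)) ≫ adjL.unit.app (F.obj (R.obj X)) = 𝟙 _ := by
    have h := adjL.right_triangle_components (R.obj X)
    rw [← cancel_mono (F.map (adjL.counit.app (R.obj X))), Category.assoc, h]
    simp
  have key : adjL.counit.app (R.obj X) ≫ R.map (adjL.unit.app X)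
      = L.map (adjR.counit.app X) ≫ adjR.unit.app (L.obj X) := by
    apply F.map_injective
    rw [← cancel_mono (adjR.counit.app (F.obj (L.obj X)))]
    simp only [Functor.map_comp, Category.assoc]
    erw [adjR.counit_naturality (adjL.unit.app X),
      ← adjL.unit_naturality (adjR.counit.app X)]
    erw [reassoc_of% heps]
    simp
  simp only [NatTrans.comp_app, Functor.whiskerRight_app, Functor.whiskerLeft_app, NatIso.isIso_inv_app,
    IsIso.eq_inv_comp, IsIso.comp_inv_eq, Category.assoc]
  rw [reassoc_of% key]
  simp
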